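/- Lemma 5.4: let μ be a probability measure on (0,∞) with positive density and mean S_0 ∈ (b̲,b̄), with ρ₋, ρ₊ defined by barycentre conditions. If b̄ ≥ ρ₋(0) and b̲ ≤ ρ₊(∞), then it is impossible that simultaneously there exist z₀ ≥ b̄ with μ_B((0,ρ₋(0)) ∪ (z₀,∞)) = b̄ (i.e. γ₋(z₀)=0) and w₀ ≤ b̲ with μ_B((0,w₀) ∪ (ρ₊(∞),∞)) = b̲ (i.e. γ₊(w₀)=∞). -/

import Mathlib

open MeasureTheory Set

noncomputable def bary (μ : Measure ℝ) (Γ : Set ℝ) : ℝ :=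
  (∫ u in Γ, u ∂μ) / (μ Γ).toReal

/-- Lemma 5.4: if `b̄ ≥ ρ₋(0)` and `b̲ ≤ ρ₊(∞)` then one cannot have
simultaneously `γ₋(z₀) = 0` for some `z₀ ≥ b̄` and `γ₊(w₀) = ∞` for some
`w₀ ≤ b̲`. -/
theorem stmt9 (μ : Measure ℝ) [IsProbabilityMeasure μ]
    (hsupp : μ (Set.Iic 0) = 0)
    (hdens : ∀ a b : ℝ, 0 ≤ a → a < b → 0 < μ (Set.Ioo a b))
    (hint : Integrable id μ)
    (S₀ lb ub : ℝ) (hmean : ∫ u, u ∂μ = S₀)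
    (h0 : 0 < lb) (h1 : lb < S₀) (h2 : S₀ < ub)
    (ρm0 ρpInf : ℝ)
    (hρm0 : lb < ρm0 ∧ bary μ (Set.Icc 0 ρm0) = lb)
    (hρpInf : 0 < ρpInf ∧ ρpInf < ub ∧ bary μ (Set.Ici ρpInf) = ub)
    (hA : ρm0 ≤ ub) (hB : lb ≤ ρpInf) :
    ¬ ((∃ z₀, ub ≤ z₀ ∧ bary μ (Set.Ioo 0 ρm0 ∪ Set.Ioi z₀) = ub) ∧
       (∃ w₀, 0 ≤ w₀ ∧ w₀ ≤ lb ∧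
         bary μ (Set.Ioo 0 w₀ ∪ Set.Ioi ρpInf) = lb)) := by
  rintro ⟨⟨z₀, hz₀, hγm⟩, w₀, hw₀0, hw₀lb, hγp⟩
  obtain ⟨hlbρ, -⟩ := hρm0
  obtain ⟨hρp0, hρpub, -⟩ := hρpInf
  have hlbub : lb < ub := h1.trans h2
  have hρm0pos : (0:ℝ) < ρm0 := h0.trans hlbρ
  set c : ℝ := (w₀ + ρm0) / 2 with hc
  have hw₀ρ : w₀ < ρm0 := lt_of_le_of_lt hw₀lb hlbρ
  have hw₀c : w₀ < c := by rw [hc]; linarith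
  have hcρ : c < ρm0 := by rw [hc]; linarith
  have hInt : Integrable (fun x : ℝ => x) μ := hint
  have hIub : Integrable (fun x : ℝ => ub - x) μ := (integrable_const ub).sub hInt
  have hIub' : Integrable (fun x : ℝ => x - ub) μ := hInt.sub (integrable_const ub)
  have hIlb' : Integrable (fun x : ℝ => x - lb) μ := hInt.sub (integrable_const lb)
  have hIlb : Integrable (fun x : ℝ => lb - x) μ := (integrable_const lb).sub hInt
  -- positive measures
  have hm1 : 0 < μ (Ioo 0 ρm0) := hdens 0 ρm0 le_rfl hρm0pos
  have hm2 : 0 < μ (Ioi ρpInf) :=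
    lt_of_lt_of_le (hdens ρpInf (ρpInf + 1) hρp0.le (by linarith)) (measure_mono Ioo_subset_Ioi_self)
  have hm3 : 0 < μ (Ioo w₀ c) := hdens w₀ c hw₀0 hw₀c
  -- disjointness
  have hd1 : Disjoint (Ioo (0:ℝ) ρm0) (Ioi z₀) := by
    rw [Set.disjoint_left]
    rintro x ⟨-, hx2⟩ hx3
    rw [mem_Ioi] at hx3
    linarith
  have hd2 : Disjoint (Ioo (0:ℝ) w₀) (Ioi ρpInf) := by
    rw [Set.disjoint_left]
    rintro x ⟨-, hx2⟩ hx3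
    rw [mem_Ioi] at hx3
    linarith
  have hd3 : Disjoint (Ioo (0:ℝ) w₀) (Ioo w₀ c) := by
    rw [Set.disjoint_left]
    rintro x ⟨-, hx2⟩ ⟨hx3, -⟩
    linarith
  -- nonzero toReal of the two union sets
  have htop : ∀ s : Set ℝ, μ s ≠ ⊤ := fun s => measure_ne_top μ s
  have hpos1 : 0 < (μ (Ioo 0 ρm0 ∪ Ioi z₀)).toReal := by
    apply ENNReal.toReal_pos _ (htop _)
    intro h
    exact absurd (measure_mono_null subset_union_left h) hm1.ne'
  have hpos2 : 0 < (μ (Ioo 0 w₀ ∪ Ioi ρpInf)).toReal := by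
    apply ENNReal.toReal_pos _ (htop _)
    intro h
    exact absurd (measure_mono_null subset_union_right h) hm2.ne'
  -- barycentre equations
  rw [bary, div_eq_iff hpos1.ne'] at hγm
  rw [bary, div_eq_iff hpos2.ne'] at hγp
  -- split the unions
  have hμ1 : (μ (Ioo 0 ρm0 ∪ Ioi z₀)).toReal
      = (μ (Ioo 0 ρm0)).toReal + (μ (Ioi z₀)).toReal := by
    rw [measure_union hd1 measurableSet_Ioi, ENNReal.toReal_add (htop _) (htop _)]
  have hμ2 : (μ (Ioo 0 w₀ ∪ Ioi ρpInf)).toReal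
      = (μ (Ioo 0 w₀)).toReal + (μ (Ioi ρpInf)).toReal := by
    rw [measure_union hd2 measurableSet_Ioi, ENNReal.toReal_add (htop _) (htop _)]
  have hι1 : ∫ x in (Ioo 0 ρm0 ∪ Ioi z₀), x ∂μ
      = (∫ x in Ioo 0 ρm0, x ∂μ) + ∫ x in Ioi z₀, x ∂μ :=
    setIntegral_union hd1 measurableSet_Ioi hInt.integrableOn hInt.integrableOn
  have hι2 : ∫ x in (Ioo 0 w₀ ∪ Ioi ρpInf), x ∂μ
      = (∫ x in Ioo 0 w₀, x ∂μ) + ∫ x in Ioi ρpInf, x ∂μ :=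
    setIntegral_union hd2 measurableSet_Ioi hInt.integrableOn hInt.integrableOn
  -- express the affine integrals
  have haff : ∀ (s : Set ℝ) (k : ℝ), ∫ x in s, (k - x) ∂μ
      = k * (μ s).toReal - ∫ x in s, x ∂μ := by
    intro s k
    rw [integral_sub (integrable_const k).integrableOn hInt.integrableOn,
      setIntegral_const, smul_eq_mul, mul_comm, measureReal_def]
  have haff' : ∀ (s : Set ℝ) (k : ℝ), ∫ x in s, (x - k) ∂μ
      = (∫ x in s, x ∂μ) - k * (μ s).toReal := by
    intro s k
    rw [integral_sub hInt.integrableOn (integrable_const k).integrableOn,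
      setIntegral_const, smul_eq_mul, mul_comm, measureReal_def]
  -- key equalities from the two barycentre hypotheses
  have hEq1 : ∫ x in Ioo 0 ρm0, (ub - x) ∂μ = ∫ x in Ioi z₀, (x - ub) ∂μ := by
    rw [haff, haff']
    rw [hι1, hμ1] at hγm
    linarith
  have hEq2 : ∫ x in Ioo 0 w₀, (lb - x) ∂μ = ∫ x in Ioi ρpInf, (x - lb) ∂μ := by
    rw [haff, haff']
    rw [hι2, hμ2] at hγp
    linarith
  -- chain of inequalities
  have h12 : ∫ x in Ioi z₀, (x - ub) ∂μ ≤ ∫ x in Ioi z₀, (x - lb) ∂μ :=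
    setIntegral_mono_on hIub'.integrableOn hIlb'.integrableOn measurableSet_Ioi
      (fun x _ => by linarith)
  have h23 : ∫ x in Ioi z₀, (x - lb) ∂μ ≤ ∫ x in Ioi ρpInf, (x - lb) ∂μ := by
    apply setIntegral_mono_set hIlb'.integrableOn
    · exact ae_restrict_of_forall_mem measurableSet_Ioi (fun x hx => by
        rw [mem_Ioi] at hx; simp only [Pi.zero_apply]; linarith)
    · exact (Ioi_subset_Ioi (by linarith)).eventuallyLE
  have h45 : ∫ x in Ioo 0 w₀, (lb - x) ∂μ ≤ ∫ x in Ioo 0 w₀, (ub - x) ∂μ :=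
    setIntegral_mono_on hIlb.integrableOn hIub.integrableOn measurableSet_Ioo
      (fun x _ => by linarith)
  have h56 : (∫ x in Ioo 0 w₀, (ub - x) ∂μ) + ∫ x in Ioo w₀ c, (ub - x) ∂μ
      ≤ ∫ x in Ioo 0 ρm0, (ub - x) ∂μ := by
    rw [← setIntegral_union hd3 measurableSet_Ioo hIub.integrableOn hIub.integrableOn]
    apply setIntegral_mono_set hIub.integrableOn
    · exact ae_restrict_of_forall_mem measurableSet_Ioo (fun x hx => by
        obtain ⟨-, hx2⟩ := hx; simp only [Pi.zero_apply]; linarith)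
    · have hsub : Ioo (0:ℝ) w₀ ∪ Ioo w₀ c ⊆ Ioo 0 ρm0 := by
        rintro x (⟨hx1, hx2⟩ | ⟨hx1, hx2⟩) <;> exact ⟨by linarith, by linarith⟩
      exact hsub.eventuallyLE
  have h6 : 0 < ∫ x in Ioo w₀ c, (ub - x) ∂μ := by
    have hb : ((ρm0 - w₀) / 2) * (μ (Ioo w₀ c)).toReal ≤ ∫ x in Ioo w₀ c, (ub - x) ∂μ := by
      have := setIntegral_mono_on
        (f := fun _ : ℝ => (ρm0 - w₀) / 2) (g := fun x : ℝ => ub - x)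
        (s := Ioo w₀ c)
        (integrable_const _).integrableOn hIub.integrableOn measurableSet_Ioo
        (fun x hx => by have hx2 := hx.2; linarith [hc])
      rwa [setIntegral_const, smul_eq_mul, mul_comm] at this
    have hmp : 0 < (μ (Ioo w₀ c)).toReal := ENNReal.toReal_pos hm3.ne' (htop _)
    nlinarith
  linarith
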